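/- The intersection B₁ ∩ B₂ of the bisectors B(p̃₀, G₁·p̃₀) and B(p̃₀, G₃⁻¹·p̃₀) is nonempty: the explicit vector X₁₂ = ((1+ω)/4, (3−ω)/8, −(1+ω)/4) satisfies ⟨X₁₂, X₁₂⟩ = −3/4 and |⟨X₁₂, p̃₀⟩| = |⟨X₁₂, G₁·p̃₀⟩| = |⟨X₁₂, G₃⁻¹·p̃₀⟩|. -/

import Mathlib

noncomputable section

open Matrix

/-- ω = i·√7 -/
def ω : ℂ := Complex.I * Real.sqrt 7

def G₁ : Matrix (Fin 3) (Fin 3) ℂ := !![1, 1, (-1-ω)/2; 0, 1, -1; 0, 0, 1]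

def G₃ : Matrix (Fin 3) (Fin 3) ℂ := !![1, 0, 0; -1, 1, 0; (-1+ω)/2, 1, 1]

/-- Hermitian form ⟨Z,W⟩ = Z₁·conj(W₃) + Z₂·conj(W₂) + Z₃·conj(W₁). -/
def herm (Z W : Fin 3 → ℂ) : ℂ :=
  Z 0 * (starRingEnd ℂ) (W 2) + Z 1 * (starRingEnd ℂ) (W 1) + Z 2 * (starRingEnd ℂ) (W 0)

def p₀ : Fin 3 → ℂ := ![1, -(3+ω)/4, -1]

def X₁₂ : Fin 3 → ℂ := ![(1+ω)/4, (3-ω)/8, -(1+ω)/4]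

lemma conj_ω : (starRingEnd ℂ) ω = -ω := by
  simp [ω, Complex.ext_iff]

lemma ω_sq : ω * ω = -7 := by
  have h7 : ((Real.sqrt 7 : ℂ)) * (Real.sqrt 7 : ℂ) = 7 := by
    rw [← Complex.ofReal_mul, Real.mul_self_sqrt (by norm_num)]
    norm_num
  simp only [ω]
  linear_combination (Complex.I ^ 2) * h7 + 7 * Complex.I_sq

lemma G₃_inv : G₃⁻¹ = !![1, 0, 0; 1, 1, 0; (-1-ω)/2, -1, 1] := by
  apply Matrix.inv_eq_right_inv
  ext i j
  fin_cases i <;> fin_cases j <;>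
    (simp [G₃, Matrix.mul_apply, Fin.sum_univ_succ]; try ring)

lemma hv1 : G₁ *ᵥ p₀ = ![(3+ω)/4, (1-ω)/4, -1] := by
  funext i
  fin_cases i <;>
    (simp [G₁, p₀, Matrix.mulVec, dotProduct, Fin.sum_univ_three]; try ring)

lemma hv3 : G₃⁻¹ *ᵥ p₀ = ![1, (1-ω)/4, (-3-ω)/4] := by
  rw [G₃_inv]
  funext i
  fin_cases i <;>
    (simp [p₀, Matrix.mulVec, dotProduct, Fin.sum_univ_three]; try ring)

lemma key : herm X₁₂ p₀ = -9/16 - 5/16 * ω := by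
  simp only [herm, X₁₂, p₀, Matrix.cons_val_zero, Matrix.cons_val_one, Matrix.head_cons,
    Matrix.cons_val_two, Matrix.tail_cons, map_div₀, map_sub, map_add, map_neg,
    _root_.map_one, map_ofNat, conj_ω]
  linear_combination (-1/32 : ℂ) * ω_sq

lemma key1 : herm X₁₂ (G₁ *ᵥ p₀) = -9/16 - 5/16 * ω := by
  rw [hv1]
  simp only [herm, X₁₂, Matrix.cons_val_zero, Matrix.cons_val_one, Matrix.head_cons,
    Matrix.cons_val_two, Matrix.tail_cons, map_div₀, map_sub, map_add, map_neg,
    _root_.map_one, map_ofNat, conj_ω]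
  linear_combination (1/32 : ℂ) * ω_sq

lemma key3 : herm X₁₂ (G₃⁻¹ *ᵥ p₀) = -9/16 - 5/16 * ω := by
  rw [hv3]
  simp only [herm, X₁₂, Matrix.cons_val_zero, Matrix.cons_val_one, Matrix.head_cons,
    Matrix.cons_val_two, Matrix.tail_cons, map_div₀, map_sub, map_add, map_neg,
    _root_.map_one, map_ofNat, conj_ω]
  linear_combination (1/32 : ℂ) * ω_sq

theorem stmt15 :
    herm X₁₂ X₁₂ = -3/4 ∧
    ‖herm X₁₂ p₀‖ = ‖herm X₁₂ (G₁ *ᵥ p₀)‖ ∧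
    ‖herm X₁₂ p₀‖ = ‖herm X₁₂ (G₃⁻¹ *ᵥ p₀)‖ := by
  refine ⟨?_, by rw [key, key1], by rw [key, key3]⟩
  simp only [herm, X₁₂, Matrix.cons_val_zero, Matrix.cons_val_one, Matrix.head_cons,
    Matrix.cons_val_two, Matrix.tail_cons, map_div₀, map_sub, map_add, map_neg,
    _root_.map_one, map_ofNat, conj_ω]
  linear_combination (7/64 : ℂ) * ω_sq
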